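/- Let V ⊂ ℝ^n be a linear subspace and ξ a unit simple p-vector in Λ^p ℝ^n. Then there exist orthonormal vectors f₁,…,f_r in V, orthonormal vectors g₁,…,g_s in V^⊥, and angles 0 < θⱼ < π/2 for j = 1,…,k (with k ≤ r, k ≤ s, and r + s − k = p) such that ξ = (cos θ₁ f₁ + sin θ₁ g₁) ∧ ⋯ ∧ (cos θ_k f_k + sin θ_k g_k) ∧ f_{k+1} ∧ ⋯ ∧ f_r ∧ g_{k+1} ∧ ⋯ ∧ g_s. -/

import Mathlib

noncomputable section
open Module

theorem altmap_eq_det_smul' {R M N ι : Type*} [CommRing R] [AddCommGroup M] [Module R M]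
    [AddCommGroup N] [Module R N] [Fintype ι] [DecidableEq ι]
    (e : Basis ι R M) (f : M [⋀^ι]→ₗ[R] N) (v : ι → M) :
    f v = e.det v • f e := by
  have : f = (LinearMap.toSpanSingleton R N (f e)).compAlternatingMap e.det := by
    refine Basis.ext_alternating e fun i h => ?_
    let σ : Equiv.Perm ι := Equiv.ofBijective i (Finite.injective_iff_bijective.1 h)
    change f (⇑e ∘ σ) = (e.det (⇑e ∘ σ)) • f ⇑e
    rw [AlternatingMap.map_perm, AlternatingMap.map_perm, Basis.det_self, smul_assoc, one_smul]
  rw [this]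
  simp [LinearMap.toSpanSingleton_apply, Basis.det_self]

theorem lowerset_mem_iff' {p : ℕ} (S : Finset (Fin p)) (hS : ∀ i j : Fin p, i ≤ j → j ∈ S → i ∈ S)
    (i : Fin p) : i ∈ S ↔ (i : ℕ) < S.card := by
  constructor
  · intro hi
    have h1 : Finset.Iic i ⊆ S := fun j hj => hS j i (Finset.mem_Iic.1 hj) hi
    have := Finset.card_le_card h1
    rw [Fin.card_Iic] at this
    omega
  · intro hi
    by_contra hni
    have h1 : S ⊆ Finset.Iio i := by
      intro j hj
      rw [Finset.mem_Iio]
      by_contra hji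
      exact hni (hS i j (le_of_not_gt hji) hj)
    have := Finset.card_le_card h1
    rw [Fin.card_Iio] at this
    omega


theorem linindep_of_gram' {n p : ℕ} (v : Fin p → EuclideanSpace ℝ (Fin n))
    (h : (Matrix.of fun i j : Fin p => (inner ℝ (v i) (v j) : ℝ)).det ≠ 0) :
    LinearIndependent ℝ v := by
  by_contra hld
  obtain ⟨c, hc0, i, hci⟩ := Fintype.not_linearIndependent_iff.1 hld
  apply h
  rw [← Matrix.exists_vecMul_eq_zero_iff]
  refine ⟨c, fun hc => hci (congrFun hc i), ?_⟩
  funext j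
  calc Matrix.vecMul c (Matrix.of fun i j : Fin p => (inner ℝ (v i) (v j) : ℝ)) j
      = ∑ i, c i * inner ℝ (v i) (v j) := by
        simp [Matrix.vecMul, dotProduct, PiLp.inner_apply]
    _ = inner ℝ (∑ i, c i • v i) (v j) := by
        rw [sum_inner]
        exact Finset.sum_congr rfl fun i _ => (real_inner_smul_left _ _ _).symm
    _ = 0 := by rw [hc0, inner_zero_left]

set_option maxHeartbeats 1000000 in
theorem stmt7_aux (n p : ℕ) (V : Submodule ℝ (EuclideanSpace ℝ (Fin n)))
    (v e : Fin p → EuclideanSpace ℝ (Fin n)) (he : Orthonormal ℝ e)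
    (horth : ∀ i j : Fin p, i ≠ j →
      (inner ℝ ((Submodule.orthogonalProjectionOnto V (e i) : EuclideanSpace ℝ (Fin n)))
        ((Submodule.orthogonalProjectionOnto V (e j) : EuclideanSpace ℝ (Fin n))) : ℝ) = 0)
    (k r : ℕ) (hkr : k ≤ r) (hrp : r ≤ p)
    (hk0 : ∀ i : Fin p, (i : ℕ) < k →
      (Submodule.orthogonalProjectionOnto V (e i) : EuclideanSpace ℝ (Fin n)) ≠ 0 ∧
      e i - (Submodule.orthogonalProjectionOnto V (e i) : EuclideanSpace ℝ (Fin n)) ≠ 0)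
    (hk1 : ∀ i : Fin p, k ≤ (i : ℕ) → (i : ℕ) < r →
      e i - (Submodule.orthogonalProjectionOnto V (e i) : EuclideanSpace ℝ (Fin n)) = 0)
    (hk2 : ∀ i : Fin p, r ≤ (i : ℕ) →
      (Submodule.orthogonalProjectionOnto V (e i) : EuclideanSpace ℝ (Fin n)) = 0)
    (heq : ExteriorAlgebra.ιMulti ℝ p v = ExteriorAlgebra.ιMulti ℝ p e) :
    ∃ (r s k : ℕ) (hkr : k ≤ r) (hks : k ≤ s) (hrs : r + s = p + k)
      (f : Fin r → EuclideanSpace ℝ (Fin n))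
      (g : Fin s → EuclideanSpace ℝ (Fin n)) (θ : Fin k → ℝ),
      (∀ i, f i ∈ V) ∧ Orthonormal ℝ f ∧
      (∀ i, g i ∈ Vᗮ) ∧ Orthonormal ℝ g ∧
      (∀ j, 0 < θ j ∧ θ j < Real.pi / 2) ∧
      ExteriorAlgebra.ιMulti ℝ p v =
        ExteriorAlgebra.ιMulti ℝ p (fun i : Fin p =>
          if h1 : (i : ℕ) < k then
            Real.cos (θ ⟨i, h1⟩) • f ⟨i, by omega⟩ +
              Real.sin (θ ⟨i, h1⟩) • g ⟨i, by omega⟩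
          else if h2 : (i : ℕ) < r then f ⟨i, h2⟩
          else g ⟨(i : ℕ) - r + k, by have := i.isLt; omega⟩) := by
  classical
  set s : ℕ := p + k - r with hs
  have hks : k ≤ s := by omega
  have hrs : r + s = p + k := by omega
  -- basic objects
  set u : Fin p → EuclideanSpace ℝ (Fin n) :=
    fun i => (Submodule.orthogonalProjectionOnto V (e i) : EuclideanSpace ℝ (Fin n)) with hu
  set w : Fin p → EuclideanSpace ℝ (Fin n) := fun i => e i - u i with hwdef
  have huV : ∀ i, u i ∈ V := fun i => SetLike.coe_mem _
  have hwV : ∀ i, w i ∈ Vᗮ := fun i => Submodule.sub_starProjection_mem_orthogonal (K := V) (e i)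
  have huw : ∀ i j, (inner ℝ (u i) (w j) : ℝ) = 0 := fun i j =>
    Submodule.inner_right_of_mem_orthogonal (huV i) (hwV j)
  have hwu : ∀ i j, (inner ℝ (w i) (u j) : ℝ) = 0 := fun i j => by
    rw [real_inner_comm]; exact huw j i
  have he_sum : ∀ i, e i = u i + w i := fun i => by simp [hwdef]
  have huu : ∀ i j, i ≠ j → (inner ℝ (u i) (u j) : ℝ) = 0 := horth
  have hee : ∀ i j, (inner ℝ (e i) (e j) : ℝ) = if i = j then 1 else 0 :=
    fun i j => orthonormal_iff_ite.mp he i j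
  have hww : ∀ i j, i ≠ j → (inner ℝ (w i) (w j) : ℝ) = 0 := by
    intro i j hij
    have h1 : (inner ℝ (e i) (e j) : ℝ) =
        inner ℝ (u i) (u j) + inner ℝ (u i) (w j) + (inner ℝ (w i) (u j) + inner ℝ (w i) (w j)) := by
      rw [he_sum i, he_sum j, inner_add_left, inner_add_right, inner_add_right]
    have h0 := hee i j
    rw [if_neg hij] at h0
    rw [h0, huu i j hij, huw i j, hwu i j] at h1
    linarith
  have hnorm : ∀ i, ‖u i‖ ^ 2 + ‖w i‖ ^ 2 = 1 := by
    intro i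
    have h1 : ‖e i‖ = 1 := he.1 i
    have h2 : ‖u i + w i‖ ^ 2 = ‖u i‖ ^ 2 + 2 * inner ℝ (u i) (w i) + ‖w i‖ ^ 2 :=
      norm_add_sq_real _ _
    rw [← he_sum i, h1, huw i i] at h2
    nlinarith
  -- pure cases
  have hmid : ∀ i : Fin p, k ≤ (i : ℕ) → (i : ℕ) < r → u i = e i ∧ ‖u i‖ = 1 := by
    intro i h1 h2
    have hw0 : w i = 0 := hk1 i h1 h2
    have : u i = e i := by
      have := he_sum i; rw [hw0, add_zero] at this; exact this.symm
    exact ⟨this, by rw [this]; exact he.1 i⟩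
  have htop : ∀ i : Fin p, r ≤ (i : ℕ) → w i = e i ∧ ‖w i‖ = 1 := by
    intro i h1
    have hu0 : u i = 0 := hk2 i h1
    have : w i = e i := by rw [hwdef]; simp [hu0]
    exact ⟨this, by rw [this]; exact he.1 i⟩
  -- the vectors
  set f : Fin r → EuclideanSpace ℝ (Fin n) :=
    fun i => ‖u ⟨i, lt_of_lt_of_le i.2 hrp⟩‖⁻¹ • u ⟨i, lt_of_lt_of_le i.2 hrp⟩ with hf
  have hls : ∀ j : Fin s, ¬ (j : ℕ) < k → (j : ℕ) - k + r < p := fun j hj => by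
    have := j.2; omega
  set l : Fin s → Fin p := fun j =>
    if hj : (j : ℕ) < k then ⟨j, by omega⟩ else ⟨(j : ℕ) - k + r, hls j hj⟩ with hl
  set g : Fin s → EuclideanSpace ℝ (Fin n) := fun j => ‖w (l j)‖⁻¹ • w (l j) with hg
  set θ : Fin k → ℝ := fun j => Real.arcsin ‖w ⟨j, by omega⟩‖ with hθ
  -- nonvanishing
  have hune : ∀ i : Fin p, (i : ℕ) < r → u i ≠ 0 := by
    intro i hir
    by_cases hik : (i : ℕ) < k
    · exact (hk0 i hik).1
    · intro h0
      have := (hmid i (le_of_not_gt hik) hir).2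
      rw [h0] at this; simp at this
  have hwne : ∀ j : Fin s, w (l j) ≠ 0 := by
    intro j
    by_cases hj : (j : ℕ) < k
    · have : l j = ⟨(j : ℕ), by omega⟩ := by rw [hl]; exact dif_pos hj
      rw [this]
      exact (hk0 _ (by simpa using hj)).2
    · have hlj : l j = ⟨(j : ℕ) - k + r, hls j hj⟩ := by rw [hl]; exact dif_neg hj
      intro h0
      have := (htop (l j) (by rw [hlj]; simp)).2
      rw [h0] at this
      simp at this
  have linj : Function.Injective l := by
    intro a b hab
    have : (l a : ℕ) = (l b : ℕ) := by rw [hab]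
    rw [hl] at this
    by_cases ha : (a : ℕ) < k <;> by_cases hb : (b : ℕ) < k <;>
      simp [ha, hb] at this <;> exact Fin.ext (by omega)
  -- membership
  have hfV : ∀ i, f i ∈ V := fun i => Submodule.smul_mem _ _ (huV _)
  have hgV : ∀ j, g j ∈ Vᗮ := fun j => Submodule.smul_mem _ _ (hwV _)
  -- orthonormality
  have hfON : Orthonormal ℝ f := by
    rw [orthonormal_iff_ite]
    intro i j
    rw [hf]
    simp only [real_inner_smul_left, real_inner_smul_right]
    by_cases hij : i = j
    · subst hij
      rw [if_pos rfl, real_inner_self_eq_norm_sq]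
      have := hune ⟨i, lt_of_lt_of_le i.2 hrp⟩ i.2
      have hn : ‖u ⟨i, lt_of_lt_of_le i.2 hrp⟩‖ ≠ 0 := norm_ne_zero_iff.mpr this
      field_simp
    · rw [if_neg hij, huu _ _ (by simp [Fin.ext_iff]; exact fun h => hij (Fin.ext h))]
      ring
  have hgON : Orthonormal ℝ g := by
    rw [orthonormal_iff_ite]
    intro i j
    rw [hg]
    simp only [real_inner_smul_left, real_inner_smul_right]
    by_cases hij : i = j
    · subst hij
      rw [if_pos rfl, real_inner_self_eq_norm_sq]
      have hn : ‖w (l i)‖ ≠ 0 := norm_ne_zero_iff.mpr (hwne i)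
      field_simp
    · rw [if_neg hij, hww _ _ (fun h => hij (linj h))]
      ring
  -- angles
  have hθbound : ∀ j : Fin k, 0 < θ j ∧ θ j < Real.pi / 2 := by
    intro j
    have hjp : (j : ℕ) < p := by omega
    have h0 : w ⟨j, hjp⟩ ≠ 0 := (hk0 ⟨j, hjp⟩ (by simpa using j.2)).2
    have hu0 : u ⟨j, hjp⟩ ≠ 0 := (hk0 ⟨j, hjp⟩ (by simpa using j.2)).1
    have hwlt : ‖w ⟨j, hjp⟩‖ < 1 := by
      have := hnorm ⟨j, hjp⟩
      have h1 : 0 < ‖u ⟨j, hjp⟩‖ := norm_pos_iff.mpr hu0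
      nlinarith [norm_nonneg (w ⟨j, hjp⟩)]
    constructor
    · exact Real.arcsin_pos.mpr (norm_pos_iff.mpr h0)
    · exact Real.arcsin_lt_pi_div_two.mpr hwlt
  refine ⟨r, s, k, hkr, hks, hrs, f, g, θ, hfV, hfON, hgV, hgON, hθbound, ?_⟩
  rw [heq]
  congr 1
  funext i
  by_cases h1 : (i : ℕ) < k
  · rw [dif_pos h1]
    have hwle : ‖w i‖ ≤ 1 := by nlinarith [hnorm i, norm_nonneg (w i), norm_nonneg (u i)]
    have hθi : θ ⟨(i : ℕ), h1⟩ = Real.arcsin ‖w i‖ := rfl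
    have hsin : Real.sin (θ ⟨(i : ℕ), h1⟩) = ‖w i‖ := by
      rw [hθi]; exact Real.sin_arcsin (by linarith [norm_nonneg (w i)]) hwle
    have hcos : Real.cos (θ ⟨(i : ℕ), h1⟩) = ‖u i‖ := by
      rw [hθi, Real.cos_arcsin, show 1 - ‖w i‖ ^ 2 = ‖u i‖ ^ 2 by linarith [hnorm i],
        Real.sqrt_sq (norm_nonneg _)]
    have hfi : f ⟨(i : ℕ), by omega⟩ = ‖u i‖⁻¹ • u i := rfl
    have hgi : g ⟨(i : ℕ), by omega⟩ = ‖w i‖⁻¹ • w i := by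
      have hli : l ⟨(i : ℕ), by omega⟩ = i := by
        simp only [hl]
        rw [dif_pos (show ((⟨(i : ℕ), by omega⟩ : Fin s) : ℕ) < k from h1)]
      show ‖w (l ⟨(i : ℕ), by omega⟩)‖⁻¹ • w (l ⟨(i : ℕ), by omega⟩) = _
      rw [hli]
    rw [hfi, hgi, hcos, hsin, smul_smul, smul_smul,
      mul_inv_cancel₀ (norm_ne_zero_iff.mpr (hune i (by omega))),
      mul_inv_cancel₀ (norm_ne_zero_iff.mpr (hk0 i h1).2), one_smul, one_smul]
    exact he_sum i
  · rw [dif_neg h1]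
    by_cases h2 : (i : ℕ) < r
    · rw [dif_pos h2]
      have hfi : f ⟨(i : ℕ), h2⟩ = ‖u i‖⁻¹ • u i := rfl
      obtain ⟨heu, hnu⟩ := hmid i (le_of_not_gt h1) h2
      rw [hfi, hnu, inv_one, one_smul, heu]
    · rw [dif_neg h2]
      have hjs : (i : ℕ) - r + k < s := by have := i.isLt; omega
      have hli : l ⟨(i : ℕ) - r + k, hjs⟩ = i := by
        simp only [hl]
        rw [dif_neg (show ¬ ((⟨(i : ℕ) - r + k, hjs⟩ : Fin s) : ℕ) < k from by
          simp only [Fin.val_mk]; omega)]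
        exact Fin.ext (by simp only [Fin.val_mk]; omega)
      have hgi : g ⟨(i : ℕ) - r + k, by have := i.isLt; omega⟩ = ‖w i‖⁻¹ • w i := by
        show ‖w (l ⟨(i : ℕ) - r + k, hjs⟩)‖⁻¹ • w (l ⟨(i : ℕ) - r + k, hjs⟩) = _
        rw [hli]
      obtain ⟨hew, hnw⟩ := htop i (le_of_not_gt h2)
      rw [hgi, hnw, inv_one, one_smul, hew]

set_option maxHeartbeats 1000000 in
theorem stmt7 (n p : ℕ) (V : Submodule ℝ (EuclideanSpace ℝ (Fin n)))
    (v : Fin p → EuclideanSpace ℝ (Fin n))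
    (hunit : (Matrix.of fun i j : Fin p => (inner ℝ (v i) (v j) : ℝ)).det = 1) :
    ∃ (r s k : ℕ) (hkr : k ≤ r) (hks : k ≤ s) (hrs : r + s = p + k)
      (f : Fin r → EuclideanSpace ℝ (Fin n))
      (g : Fin s → EuclideanSpace ℝ (Fin n)) (θ : Fin k → ℝ),
      (∀ i, f i ∈ V) ∧ Orthonormal ℝ f ∧
      (∀ i, g i ∈ Vᗮ) ∧ Orthonormal ℝ g ∧
      (∀ j, 0 < θ j ∧ θ j < Real.pi / 2) ∧
      ExteriorAlgebra.ιMulti ℝ p v =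
        ExteriorAlgebra.ιMulti ℝ p (fun i : Fin p =>
          if h1 : (i : ℕ) < k then
            Real.cos (θ ⟨i, h1⟩) • f ⟨i, by omega⟩ +
              Real.sin (θ ⟨i, h1⟩) • g ⟨i, by omega⟩
          else if h2 : (i : ℕ) < r then f ⟨i, h2⟩
          else g ⟨(i : ℕ) - r + k, by have := i.isLt; omega⟩) := by
  classical
  have hli : LinearIndependent ℝ v := linindep_of_gram' v (by rw [hunit]; norm_num)
  set W : Submodule ℝ (EuclideanSpace ℝ (Fin n)) := Submodule.span ℝ (Set.range v) with hWdef
  have hW : finrank ℝ W = p := by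
    rw [finrank_span_eq_card hli, Fintype.card_fin]
  set U : EuclideanSpace ℝ (Fin n) → EuclideanSpace ℝ (Fin n) :=
    fun z => (Submodule.orthogonalProjectionOnto V z : EuclideanSpace ℝ (Fin n)) with hU
  set T : W →ₗ[ℝ] W := (Submodule.orthogonalProjectionOnto W).toLinearMap ∘ₗ
    (V.subtype ∘ₗ ((Submodule.orthogonalProjectionOnto V).toLinearMap ∘ₗ W.subtype)) with hT
  have hTapp : ∀ x : W, T x = Submodule.orthogonalProjectionOnto W (U ↑x) := fun x => rfl
  have hinner : ∀ x y : W, (inner ℝ (T x) y : ℝ) = inner ℝ (U ↑x) (U ↑y) := by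
    intro x y
    rw [hTapp, Submodule.inner_orthogonalProjectionOnto_eq_of_mem_right]
    have h0 : (inner ℝ (U ↑x) ((y : EuclideanSpace ℝ (Fin n)) - U ↑y) : ℝ) = 0 :=
      Submodule.inner_right_of_mem_orthogonal (SetLike.coe_mem _)
        (Submodule.sub_starProjection_mem_orthogonal (K := V) _)
    rw [inner_sub_right] at h0
    linarith
  have hsym : T.IsSymmetric := by
    intro x y
    calc (inner ℝ (T x) y : ℝ) = inner ℝ (U ↑x) (U ↑y) := hinner x y
      _ = inner ℝ (U ↑y) (U ↑x) := real_inner_comm _ _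
      _ = inner ℝ (T y) x := (hinner y x).symm
      _ = inner ℝ x (T y) := real_inner_comm _ _
  set b : OrthonormalBasis (Fin p) ℝ W := hsym.eigenvectorBasis hW with hb
  set μ : Fin p → ℝ := hsym.eigenvalues hW with hμ
  have heig : ∀ i, T (b i) = μ i • b i := fun i =>
    (hsym.hasEigenvector_eigenvectorBasis hW i).apply_eq_smul
  have hbON : ∀ i j : Fin p, (inner ℝ (b i) (b j) : ℝ) = if i = j then 1 else 0 :=
    fun i j => orthonormal_iff_ite.mp b.orthonormal i j
  have hub : ∀ i j : Fin p, i ≠ j →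
      (inner ℝ (U ↑(b i)) (U ↑(b j)) : ℝ) = 0 := by
    intro i j hij
    rw [← hinner, heig i]
    rw [Submodule.coe_inner, Submodule.coe_smul, real_inner_smul_left, ← Submodule.coe_inner]
    rw [hbON i j, if_neg hij]
    simp
  -- sorting
  set key0 : Fin p → ℕ := fun i =>
    if U ↑(b i) = 0 then 2 else if (b i : EuclideanSpace ℝ (Fin n)) - U ↑(b i) = 0 then 1 else 0
    with hkey0
  set σ : Equiv.Perm (Fin p) := Tuple.sort key0 with hσ
  set e1 : Fin p → EuclideanSpace ℝ (Fin n) := fun i => (b (σ i) : EuclideanSpace ℝ (Fin n))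
    with he1
  set u1 : Fin p → EuclideanSpace ℝ (Fin n) := fun i => U (e1 i) with hu1
  set key1 : Fin p → ℕ := fun i =>
    if u1 i = 0 then 2 else if e1 i - u1 i = 0 then 1 else 0 with hkey1
  have hkey1σ : key1 = key0 ∘ σ := rfl
  have hmono : Monotone key1 := by rw [hkey1σ]; exact Tuple.monotone_sort key0
  have he1ON : Orthonormal ℝ e1 := by
    rw [orthonormal_iff_ite]
    intro i j
    rw [he1]
    simp only
    rw [← Submodule.coe_inner, hbON]
    by_cases hij : i = j
    · subst hij; simp
    · rw [if_neg (fun h => hij (σ.injective h)), if_neg hij]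
  have hor1 : ∀ i j : Fin p, i ≠ j → (inner ℝ (u1 i) (u1 j) : ℝ) = 0 := fun i j hij =>
    hub (σ i) (σ j) (fun h => hij (σ.injective h))
  -- the counts
  set k : ℕ := (Finset.univ.filter (fun i : Fin p => key1 i = 0)).card with hk
  set r : ℕ := (Finset.univ.filter (fun i : Fin p => key1 i ≤ 1)).card with hr
  have hchar0 : ∀ i : Fin p, key1 i = 0 ↔ (i : ℕ) < k := by
    intro i
    rw [hk, ← lowerset_mem_iff' _ (fun a c hac hc => ?_) i]
    · simp
    · simp only [Finset.mem_filter, Finset.mem_univ, true_and] at *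
      have := hmono hac
      omega
  have hchar1 : ∀ i : Fin p, key1 i ≤ 1 ↔ (i : ℕ) < r := by
    intro i
    rw [hr, ← lowerset_mem_iff' _ (fun a c hac hc => ?_) i]
    · simp
    · simp only [Finset.mem_filter, Finset.mem_univ, true_and] at *
      have := hmono hac
      omega
  have hkr : k ≤ r := by
    rw [hk, hr]
    apply Finset.card_le_card
    intro a
    simp only [Finset.mem_filter, Finset.mem_univ, true_and]
    omega
  have hrp : r ≤ p := by
    rw [hr]
    exact le_of_le_of_eq (Finset.card_le_card (Finset.subset_univ _)) (by simp)
  -- determinant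
  set vW : Fin p → W := fun i => ⟨v i, Submodule.subset_span ⟨i, rfl⟩⟩ with hvW
  set B : Basis (Fin p) ℝ W := b.toBasis.reindex σ.symm with hB
  have hBapp : ∀ i, B i = b (σ i) := by
    intro i
    rw [hB, Module.Basis.reindex_apply, Equiv.symm_symm, OrthonormalBasis.coe_toBasis]
  set M : Matrix (Fin p) (Fin p) ℝ := B.toMatrix vW with hM
  set c : ℝ := M.det with hc
  have hvsum : ∀ i, v i = ∑ j, M j i • e1 j := by
    intro i
    have h1 : vW i = ∑ j, B.repr (vW i) j • B j := (B.sum_repr (vW i)).symm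
    have h2 : (vW i : EuclideanSpace ℝ (Fin n)) = v i := rfl
    rw [← h2, h1]
    push_cast
    refine Finset.sum_congr rfl fun j _ => ?_
    rw [show M j i = B.repr (vW i) j from Basis.toMatrix_apply B vW j i, hBapp]
  have hGram : ∀ i j, (inner ℝ (v i) (v j) : ℝ) = ∑ a, M a i * M a j := by
    intro i j
    rw [hvsum i, hvsum j, sum_inner]
    rw [show (∑ a, M a i * M a j) = ∑ a, M a i * ∑ bb, M bb j * (if a = bb then (1:ℝ) else 0) by
      refine Finset.sum_congr rfl fun a _ => ?_
      congr 1
      simp]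
    refine Finset.sum_congr rfl fun a _ => ?_
    rw [real_inner_smul_left, inner_sum]
    congr 1
    refine Finset.sum_congr rfl fun bb _ => ?_
    rw [real_inner_smul_right, orthonormal_iff_ite.mp he1ON]
  have hcc : c * c = 1 := by
    have hmat : (Matrix.of fun i j : Fin p => (inner ℝ (v i) (v j) : ℝ)) = M.transpose * M := by
      ext i j
      rw [Matrix.mul_apply]
      simp only [Matrix.of_apply, Matrix.transpose_apply]
      exact hGram i j
    have h4 : (M.transpose * M).det = 1 := by rw [← hmat]; exact hunit
    rw [Matrix.det_mul, Matrix.det_transpose] at h4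
    exact h4
  have hdet : ExteriorAlgebra.ιMulti ℝ p v = c • ExteriorAlgebra.ιMulti ℝ p e1 := by
    have h1 := altmap_eq_det_smul' B ((ExteriorAlgebra.ιMulti ℝ p).compLinearMap W.subtype) vW
    have h2 : ((ExteriorAlgebra.ιMulti ℝ p).compLinearMap W.subtype) vW
        = ExteriorAlgebra.ιMulti ℝ p v := by
      rw [AlternatingMap.compLinearMap_apply]
      rfl
    have h3 : ((ExteriorAlgebra.ιMulti ℝ p).compLinearMap W.subtype) B
        = ExteriorAlgebra.ιMulti ℝ p e1 := by
      rw [AlternatingMap.compLinearMap_apply]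
      congr 1
      funext i
      show (B i : EuclideanSpace ℝ (Fin n)) = e1 i
      rw [hBapp]
    rw [← h2, h1, h3, Basis.det_apply]
  have hc1 : c = 1 ∨ c = -1 := mul_self_eq_one_iff.mp hcc
  have hcne : c ≠ 0 := by rcases hc1 with h | h <;> rw [h] <;> norm_num
  -- sign flip
  set ε : Fin p → ℝ := fun i => if (i : ℕ) = 0 then c else 1 with hε
  have hεunit : ∀ i, ε i * ε i = 1 := by
    intro i
    by_cases h : (i : ℕ) = 0
    · simp [hε, h, hcc]
    · simp [hε, h]
  have hεne : ∀ i, ε i ≠ 0 := by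
    intro i
    by_cases h : (i : ℕ) = 0
    · simp [hε, h, hcne]
    · simp [hε, h]
  set e2 : Fin p → EuclideanSpace ℝ (Fin n) := fun i => ε i • e1 i with he2
  have hUe2 : ∀ i, U (e2 i) = ε i • u1 i := by
    intro i
    rw [he2, hu1]
    simp only
    rw [hU]
    simp only
    rw [map_smul]
    rfl
  have hWe2 : ∀ i, e2 i - U (e2 i) = ε i • (e1 i - u1 i) := by
    intro i
    rw [hUe2, he2, smul_sub]
  have heq2 : ExteriorAlgebra.ιMulti ℝ p v = ExteriorAlgebra.ιMulti ℝ p e2 := by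
    rw [hdet]
    rcases hc1 with h | h
    · have : e2 = e1 := by
        funext i
        rw [he2, hε]
        simp only
        split <;> simp [h]
      rw [this, h, one_smul]
    · have hp : 0 < p := by
        by_contra hp0
        have hpe : p = 0 := by omega
        haveI : IsEmpty (Fin p) := by rw [hpe]; infer_instance
        have hd : M.det = 1 := Matrix.det_isEmpty
        rw [← hc, h] at hd
        norm_num at hd
      have hupd : e2 = Function.update e1 ⟨0, hp⟩ (c • e1 ⟨0, hp⟩) := by
        funext j
        by_cases hj : j = ⟨0, hp⟩
        · subst hj
          rw [Function.update_self, he2, hε]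
          simp
        · rw [Function.update_of_ne hj, he2, hε]
          simp only
          rw [if_neg (fun hh => hj (Fin.ext hh)), one_smul]
      rw [hupd, AlternatingMap.map_update_smul, Function.update_eq_self]
  -- properties of e2
  have he2ON : Orthonormal ℝ e2 := by
    rw [orthonormal_iff_ite]
    intro i j
    rw [he2]
    simp only
    rw [real_inner_smul_left, real_inner_smul_right, orthonormal_iff_ite.mp he1ON]
    by_cases hij : i = j
    · subst hij
      rw [if_pos rfl, mul_one]
      exact hεunit i
    · rw [if_neg hij]
      ring
  have hor2 : ∀ i j : Fin p, i ≠ j → (inner ℝ (U (e2 i)) (U (e2 j)) : ℝ) = 0 := by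
    intro i j hij
    rw [hUe2, hUe2, real_inner_smul_left, real_inner_smul_right, hor1 i j hij]
    ring
  have hk0 : ∀ i : Fin p, (i : ℕ) < k → U (e2 i) ≠ 0 ∧ e2 i - U (e2 i) ≠ 0 := by
    intro i hik
    have hkey : key1 i = 0 := (hchar0 i).mpr hik
    have hu : u1 i ≠ 0 := by
      intro h
      have h2 : key1 i = 2 := by
        show (if u1 i = 0 then 2 else if e1 i - u1 i = 0 then 1 else 0) = 2
        rw [if_pos h]
      omega
    have hw : e1 i - u1 i ≠ 0 := by
      intro h
      have h2 : key1 i = 1 := by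
        show (if u1 i = 0 then 2 else if e1 i - u1 i = 0 then 1 else 0) = 1
        rw [if_neg hu, if_pos h]
      omega
    exact ⟨by rw [hUe2]; exact smul_ne_zero (hεne i) hu,
           by rw [hWe2]; exact smul_ne_zero (hεne i) hw⟩
  have hk1 : ∀ i : Fin p, k ≤ (i : ℕ) → (i : ℕ) < r → e2 i - U (e2 i) = 0 := by
    intro i h1 h2
    have hkey : key1 i ≤ 1 := (hchar1 i).mpr h2
    have hkey' : key1 i ≠ 0 := fun h => by have := (hchar0 i).mp h; omega
    have hu : u1 i ≠ 0 := by
      intro h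
      have h3 : key1 i = 2 := by
        show (if u1 i = 0 then 2 else if e1 i - u1 i = 0 then 1 else 0) = 2
        rw [if_pos h]
      omega
    have hw : e1 i - u1 i = 0 := by
      by_contra h
      have h3 : key1 i = 0 := by
        show (if u1 i = 0 then 2 else if e1 i - u1 i = 0 then 1 else 0) = 0
        rw [if_neg hu, if_neg h]
      omega
    rw [hWe2, hw, smul_zero]
  have hk2 : ∀ i : Fin p, r ≤ (i : ℕ) → U (e2 i) = 0 := by
    intro i h1
    have hkey : ¬ key1 i ≤ 1 := fun h => by have := (hchar1 i).mp h; omega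
    have hu : u1 i = 0 := by
      by_contra h
      have h3 : key1 i ≤ 1 := by
        show (if u1 i = 0 then 2 else if e1 i - u1 i = 0 then 1 else 0) ≤ 1
        rw [if_neg h]
        split <;> omega
      omega
    rw [hUe2, hu, smul_zero]
  exact stmt7_aux n p V v e2 he2ON hor2 k r hkr hrp hk0 hk1 hk2 heq2
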